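/- (An asymptotic optimality condition.) Let f ∈ Γ(X), x* ∈ X* and x̄ ∈ A ∩ dom f. Then x̄ is an optimal solution of the problem (P_{x*}): minimize f(x) − ⟨x*, x⟩ subject to x ∈ C and f_i(x) ≤ 0 for all i ∈ I, if and only if (x*, ⟨x*, x̄⟩ − f(x̄)) ∈ w*-cl(epi f* + K). -/

import Mathlib

open Pointwise

noncomputable section

variable {X : Type*} [AddCommGroup X] [Module ℝ X] [TopologicalSpace X]

/-- Fenchel conjugate, as a function on the weak-* dual. -/
def conjFn (h : X → EReal) : WeakDual ℝ X → EReal :=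
  fun p => ⨆ x : X, (p x : EReal) - h x

/-- Epigraph of an extended-real-valued function. -/
def epiFn {V : Type*} (h : V → EReal) : Set (V × ℝ) :=
  {q | h q.1 ≤ (q.2 : EReal)}

/-- Graph of an extended-real-valued function (where it is finite). -/
def gphFn {V : Type*} (h : V → EReal) : Set (V × ℝ) :=
  {q | h q.1 = (q.2 : EReal)}

/-- Effective domain. -/
def domFn {V : Type*} (h : V → EReal) : Set V :=
  {x | h x < ⊤}

open Classical in
/-- Indicator function of a set. -/
def indicatorE {V : Type*} (D : Set V) : V → EReal :=
  fun x => if x ∈ D then (0 : EReal) else ⊤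

/-- Convex cone generated by `D ∪ {0}`. -/
def coneGen {V : Type*} [AddCommGroup V] [Module ℝ V] (D : Set V) : Set V :=
  {0} ∪ {y | ∃ t : ℝ, 0 ≤ t ∧ ∃ x ∈ convexHull ℝ D, y = t • x}

/-- `h ∈ Γ(X)`: proper, convex and lower semicontinuous. -/
def InGamma (h : X → EReal) : Prop :=
  (∀ x, h x ≠ ⊥) ∧ (∃ x, h x ≠ ⊤) ∧
    Convex ℝ {q : X × ℝ | h q.1 ≤ (q.2 : EReal)} ∧ LowerSemicontinuous h

/-- Solution set `A` of the system `σ = {f i x ≤ 0, i ∈ I; x ∈ C}`. -/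
def solSet {I : Type*} (C : Set X) (f : I → X → EReal) : Set X :=
  {x | x ∈ C ∧ ∀ i, f i x ≤ (0 : EReal)}

/-- Characteristic cone `K = cone (epi δ_C* ∪ ⋃ i, epi f_i*)` of the system. -/
def charCone {I : Type*} (C : Set X) (f : I → X → EReal) : Set (WeakDual ℝ X × ℝ) :=
  coneGen (epiFn (conjFn (indicatorE C)) ∪ ⋃ i, epiFn (conjFn (f i)))

/-- Barrier cone `barr C = dom δ_C*`. -/
def barCone (C : Set X) : Set (WeakDual ℝ X) :=
  domFn (conjFn (indicatorE C))

/-- The Farkas–Minkowski constraint qualification. -/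
def IsFM {I : Type*} (C : Set X) (f : I → X → EReal) : Prop :=
  (solSet C f).Nonempty ∧ IsClosed (charCone C f)

/-- Recession function `h^∞ = δ*_{dom h*}`. -/
def recFn (h : X → EReal) : X → EReal :=
  fun x => ⨆ q ∈ domFn (conjFn h), ((q x : ℝ) : EReal)

/-- Recession cone `D^∞ = ⋂_{t>0} t (D - a)`, for any `a ∈ D`. -/
def recCone (D : Set X) : Set X :=
  {d | ∀ a ∈ D, ∀ t : ℝ, 0 < t → d ∈ t • (D - ({a} : Set X))}

/-- Subdifferential of `h` at `a`. -/
def subdiff (h : X → EReal) (a : X) : Set (WeakDual ℝ X) :=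
  {p | (∃ r : ℝ, h a = (r : EReal)) ∧ ∀ x, h a + ((p (x - a) : ℝ) : EReal) ≤ h x}


section MyAux
variable {X : Type*} [AddCommGroup X] [Module ℝ X] [TopologicalSpace X]
instance : LocallyConvexSpace ℝ (WeakDual ℝ X) := WeakBilin.locallyConvexSpace

def Estar (h : X → EReal) : Set (WeakDual ℝ X × ℝ) :=
  {w | ∀ (x : X) (r : ℝ), h x ≤ (r : EReal) → w.1 x ≤ w.2 + r}

lemma point_iff (a t : ℝ) (b : EReal) :
    ((a : EReal) - b ≤ (t : EReal)) ↔ ∀ r : ℝ, b ≤ (r : EReal) → a ≤ t + r := by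
  induction b with
  | bot =>
    rw [EReal.coe_sub_bot]
    constructor
    · intro h; exact absurd h (by simp)
    · intro h
      have := h (a - t - 1) bot_le
      linarith
  | coe b =>
    rw [show (a : EReal) - (b : EReal) = ((a - b : ℝ) : EReal) by norm_cast,
      EReal.coe_le_coe_iff]
    constructor
    · intro h r hr
      rw [EReal.coe_le_coe_iff] at hr
      linarith
    · intro h
      have := h b le_rfl
      linarith
  | top =>
    constructor
    · intro _ r hr; exact absurd hr (by simp)
    · intro _
      rw [EReal.sub_top]
      exact bot_le

lemma epiFn_conjFn_eq (h : X → EReal) : epiFn (conjFn h) = Estar h := by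
  ext w
  simp only [epiFn, conjFn, Set.mem_setOf_eq, iSup_le_iff, Estar]
  exact forall_congr' fun x => point_iff (w.1 x) w.2 (h x)

lemma isClosed_Estar (h : X → EReal) : IsClosed (Estar h) := by
  have heq : Estar h = ⋂ (x : X) (r : ℝ),
      {w : WeakDual ℝ X × ℝ | h x ≤ (r : EReal) → w.1 x ≤ w.2 + r} := by
    ext w; simp [Estar, Set.mem_iInter]
  rw [heq]
  refine isClosed_iInter fun x => isClosed_iInter fun r => ?_
  by_cases hxr : h x ≤ (r : EReal)
  · have : {w : WeakDual ℝ X × ℝ | h x ≤ (r : EReal) → w.1 x ≤ w.2 + r}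
        = {w : WeakDual ℝ X × ℝ | w.1 x ≤ w.2 + r} := by ext; simp [hxr]
    rw [this]
    exact isClosed_le ((WeakBilin.eval_continuous _ x).comp continuous_fst)
      (continuous_snd.add continuous_const)
  · have : {w : WeakDual ℝ X × ℝ | h x ≤ (r : EReal) → w.1 x ≤ w.2 + r} = Set.univ := by
      ext; simp [hxr]
    rw [this]; exact isClosed_univ

lemma convex_Estar (h : X → EReal) : Convex ℝ (Estar h) := by
  intro w hw v hv a b ha hb hab
  simp only [Estar, Set.mem_setOf_eq] at *
  intro x r hxr
  have h1 := hw x r hxr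
  have h2 := hv x r hxr
  have e1 : (a • w + b • v).1 x = a * w.1 x + b * v.1 x := rfl
  have e2 : (a • w + b • v).2 = a * w.2 + b * v.2 := rfl
  rw [e1, e2]
  have h3 : a * r + b * r = r := by rw [← add_mul, hab, one_mul]
  nlinarith [mul_le_mul_of_nonneg_left h1 ha, mul_le_mul_of_nonneg_left h2 hb]

section Cone
variable {V : Type*} [AddCommGroup V] [Module ℝ V]

lemma subset_coneGen (D : Set V) : D ⊆ coneGen D := fun x hx =>
  Or.inr ⟨1, zero_le_one, x, subset_convexHull ℝ D hx, (one_smul ℝ x).symm⟩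

lemma zero_mem_coneGen (D : Set V) : (0 : V) ∈ coneGen D := Or.inl rfl

lemma coneGen_smul {D : Set V} {a : V} {c : ℝ} (hc : 0 ≤ c) (ha : a ∈ coneGen D) :
    c • a ∈ coneGen D := by
  rcases ha with ha | ⟨t, ht, x, hx, rfl⟩
  · rw [Set.mem_singleton_iff] at ha; subst ha; rw [smul_zero]; exact zero_mem_coneGen D
  · exact Or.inr ⟨c * t, mul_nonneg hc ht, x, hx, smul_smul c t x⟩

lemma coneGen_add {D : Set V} {a b : V} (ha : a ∈ coneGen D) (hb : b ∈ coneGen D) :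
    a + b ∈ coneGen D := by
  rcases ha with ha | ⟨t, ht, x, hx, rfl⟩
  · rw [Set.mem_singleton_iff] at ha; subst ha; rwa [zero_add]
  rcases hb with hb | ⟨s, hs, y, hy, rfl⟩
  · rw [Set.mem_singleton_iff] at hb; subst hb; rw [add_zero]
    exact Or.inr ⟨t, ht, x, hx, rfl⟩
  by_cases hts : t + s = 0
  · have ht0 : t = 0 := le_antisymm (by linarith) ht
    have hs0 : s = 0 := le_antisymm (by linarith) hs
    subst ht0; subst hs0
    rw [zero_smul, zero_smul, add_zero]; exact zero_mem_coneGen D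
  · have hpos : 0 < t + s := lt_of_le_of_ne (add_nonneg ht hs) (Ne.symm hts)
    refine Or.inr ⟨t + s, hpos.le, (t / (t + s)) • x + (s / (t + s)) • y,
      (convex_convexHull ℝ D) hx hy (div_nonneg ht hpos.le) (div_nonneg hs hpos.le)
        (by field_simp), ?_⟩
    rw [smul_add, smul_smul, smul_smul, mul_div_cancel₀ _ hts, mul_div_cancel₀ _ hts]

lemma coneGen_convex (D : Set V) : Convex ℝ (coneGen D) :=
  fun _ hx _ hy a b ha hb _ => coneGen_add (coneGen_smul ha hx) (coneGen_smul hb hy)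

lemma coneGen_subset {D M : Set V} (hDM : D ⊆ M) (hM : Convex ℝ M) (h0 : (0:V) ∈ M)
    (hsmul : ∀ c : ℝ, 0 ≤ c → ∀ y ∈ M, c • y ∈ M) : coneGen D ⊆ M := by
  rintro a (ha | ⟨t, ht, x, hx, rfl⟩)
  · rw [Set.mem_singleton_iff] at ha; subst ha; exact h0
  · exact hsmul t ht x (convexHull_min hDM hM hx)
end Cone

section Ind
variable {V : Type*}

lemma indicatorE_le_coe (D : Set V) (x : V) (r : ℝ) :
    indicatorE D x ≤ (r : EReal) ↔ x ∈ D ∧ 0 ≤ r := by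
  classical
  unfold indicatorE
  split_ifs with hx
  · simp only [hx, true_and]
    exact_mod_cast EReal.coe_le_coe_iff (x := 0)
  · simp [hx]

lemma indicatorE_of_mem {D : Set V} {x : V} (hx : x ∈ D) : indicatorE D x = 0 := if_pos hx
lemma indicatorE_of_not_mem {D : Set V} {x : V} (hx : x ∉ D) : indicatorE D x = ⊤ := if_neg hx
end Ind

/-- evaluation at a point, as a linear map on the weak-* dual -/
def evalLin (x : X) : WeakDual ℝ X →ₗ[ℝ] ℝ where
  toFun q := q x
  map_add' _ _ := rfl
  map_smul' _ _ := rfl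

lemma weakDual_dual_rep (ψ : WeakDual ℝ X →L[ℝ] ℝ) :
    ∃ x0 : X, ∀ q : WeakDual ℝ X, ψ q = q x0 := by
  classical
  have hU : ψ ⁻¹' Set.Ioo (-1 : ℝ) 1 ∈ nhds (0 : WeakDual ℝ X) := by
    refine ψ.continuous.continuousAt.preimage_mem_nhds ?_
    rw [map_zero]
    exact Ioo_mem_nhds (by norm_num) (by norm_num)
  have hind : Topology.IsInducing (fun (q : WeakDual ℝ X) (x : X) => q x) := ⟨rfl⟩
  rw [hind.nhds_eq_comap, Filter.mem_comap] at hU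
  obtain ⟨V, hV, hVsub⟩ := hU
  have hV' : V ∈ nhds (fun _ : X => (0:ℝ)) := hV
  rw [nhds_pi, Filter.mem_pi] at hV'
  obtain ⟨I, hIfin, t, ht, hIt⟩ := hV'
  -- key: functionals vanishing on I are killed by ψ
  have hker : ∀ q : WeakDual ℝ X, (∀ x ∈ I, q x = 0) → ψ q = 0 := by
    intro q hq
    by_contra hne
    set c : ℝ := 2 / |ψ q| with hc
    have habs : 0 < |ψ q| := abs_pos.2 hne
    have hmem : (fun x : X => (c • q) x) ∈ I.pi t := by
      intro x hx
      show (c • q) x ∈ t x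
      rw [show ((c • q) x : ℝ) = c * q x from rfl, hq x hx, mul_zero]
      exact mem_of_mem_nhds (ht x)
    have := hVsub (hIt hmem)
    simp only [Set.mem_preimage, Set.mem_Ioo] at this
    have habs2 : |ψ (c • q)| < 1 := abs_lt.2 this
    rw [map_smul, smul_eq_mul, abs_mul, hc, abs_div] at habs2
    rw [abs_abs] at habs2
    rw [abs_two] at habs2
    rw [div_mul_cancel₀] at habs2
    · norm_num at habs2
    · exact habs.ne'
  haveI : Fintype ↥I := hIfin.fintype
  set L : ↥I → (WeakDual ℝ X →ₗ[ℝ] ℝ) := fun i => evalLin i.1 with hL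
  have hker2 : ⨅ i, LinearMap.ker (L i) ≤ LinearMap.ker (ψ : WeakDual ℝ X →ₗ[ℝ] ℝ) := by
    intro q hq
    rw [Submodule.mem_iInf] at hq
    have : ∀ x ∈ I, q x = 0 := fun x hx => hq ⟨x, hx⟩
    exact LinearMap.mem_ker.2 (hker q this)
  have hspan := mem_span_of_iInf_ker_le_ker hker2
  rw [Submodule.mem_span_range_iff_exists_fun] at hspan
  obtain ⟨cf, hcf⟩ := hspan
  refine ⟨∑ i : ↥I, cf i • (i.1 : X), fun q => ?_⟩
  have h1 : ψ q = (∑ i : ↥I, cf i • L i) q := by rw [hcf]; rfl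
  rw [h1]
  rw [LinearMap.sum_apply, map_sum]
  refine Finset.sum_congr rfl fun i _ => ?_
  rw [LinearMap.smul_apply, map_smul, smul_eq_mul, smul_eq_mul]
  rfl

lemma prod_clm_rep (φ : (WeakDual ℝ X × ℝ) →L[ℝ] ℝ) :
    ∃ (x0 : X) (s : ℝ), ∀ (q : WeakDual ℝ X) (t : ℝ), φ (q, t) = q x0 + t * s := by
  obtain ⟨x0, hx0⟩ := weakDual_dual_rep (φ.comp (ContinuousLinearMap.inl ℝ (WeakDual ℝ X) ℝ))
  refine ⟨x0, φ (0, 1), fun q t => ?_⟩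
  have h1 : (q, t) = ((q, (0:ℝ)) : WeakDual ℝ X × ℝ) + t • ((0 : WeakDual ℝ X), (1:ℝ)) := by
    ext
    · show q = q + t • 0; rw [smul_zero, add_zero]
    · show t = 0 + t * 1; ring
  rw [h1, map_add, map_smul]
  have h2 := hx0 q
  simp only [ContinuousLinearMap.comp_apply, ContinuousLinearMap.inl_apply] at h2
  rw [h2, smul_eq_mul]

lemma prod_clm_repX (φ : (X × ℝ) →L[ℝ] ℝ) :
    ∃ (q0 : WeakDual ℝ X) (s : ℝ), ∀ (y : X) (t : ℝ), φ (y, t) = q0 y + t * s := by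
  refine ⟨(φ.comp (ContinuousLinearMap.inl ℝ X ℝ) : X →L[ℝ] ℝ), φ (0, 1), fun y t => ?_⟩
  have h1 : (y, t) = ((y, (0:ℝ)) : X × ℝ) + t • ((0 : X), (1:ℝ)) := by
    ext
    · show y = y + t • 0; rw [smul_zero, add_zero]
    · show t = 0 + t * 1; ring
  rw [h1, map_add, map_smul]
  have h2 : φ (y, 0) = (φ.comp (ContinuousLinearMap.inl ℝ X ℝ)) y := rfl
  rw [h2, smul_eq_mul]
  rfl


section FM
variable [IsTopologicalAddGroup X] [ContinuousSMul ℝ X] [LocallyConvexSpace ℝ X]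

lemma isClosed_epi {h : X → EReal} (hlsc : LowerSemicontinuous h) :
    IsClosed {q : X × ℝ | h q.1 ≤ (q.2 : EReal)} :=
  hlsc.isClosed_epigraph.preimage
    (continuous_fst.prodMk (continuous_coe_real_ereal.comp continuous_snd))

lemma exists_mem_Estar {h : X → EReal} (hh : InGamma h) : ∃ w, w ∈ Estar h := by
  obtain ⟨hbot, ⟨y0, hy0⟩, hconv, hlsc⟩ := hh
  obtain ⟨w0, hw0⟩ : ∃ r : ℝ, h y0 = (r : EReal) :=
    ⟨(h y0).toReal, ((h y0).coe_toReal hy0 (hbot y0)).symm⟩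
  have hnm : (y0, w0 - 1) ∉ {q : X × ℝ | h q.1 ≤ (q.2 : EReal)} := by
    simp only [Set.mem_setOf_eq, hw0, EReal.coe_le_coe_iff]
    intro hcon; linarith
  obtain ⟨ψ, u, hsep, hu⟩ := geometric_hahn_banach_closed_point hconv (isClosed_epi hlsc) hnm
  obtain ⟨q0, s, hrep⟩ := prod_clm_repX ψ
  have h1 := hsep (y0, w0) (by simp [Set.mem_setOf_eq, hw0])
  rw [hrep] at h1 hu
  have hs : s < 0 := by nlinarith
  have hσ : (0:ℝ) < -s := by linarith
  refine ⟨((-s)⁻¹ • q0, (-s)⁻¹ * u), fun x r hxr => ?_⟩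
  have h2 := hsep (x, r) hxr
  rw [hrep] at h2
  show (-s)⁻¹ * q0 x ≤ (-s)⁻¹ * u + r
  have h3 : q0 x ≤ u + r * (-s) := by nlinarith
  calc (-s)⁻¹ * q0 x ≤ (-s)⁻¹ * (u + r * (-s)) :=
        mul_le_mul_of_nonneg_left h3 (inv_nonneg.2 hσ.le)
    _ = (-s)⁻¹ * u + r := by
        have hsne : s ≠ 0 := by linarith
        field_simp; ring

lemma FM {h : X → EReal} (hh : InGamma h) (x : X) (r : ℝ)
    (H : ∀ w ∈ Estar h, w.1 x ≤ w.2 + r) : h x ≤ (r : EReal) := by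
  by_contra hc
  obtain ⟨⟨q0, t0⟩, hq0⟩ := exists_mem_Estar hh
  obtain ⟨hbot, ⟨y0, hy0⟩, hconv, hlsc⟩ := hh
  obtain ⟨w0, hw0⟩ : ∃ v : ℝ, h y0 = (v : EReal) :=
    ⟨(h y0).toReal, ((h y0).coe_toReal hy0 (hbot y0)).symm⟩
  obtain ⟨ψ, u, hsep, hu⟩ := geometric_hahn_banach_closed_point hconv (isClosed_epi hlsc)
    (show (x, r) ∉ {q : X × ℝ | h q.1 ≤ (q.2 : EReal)} from fun hmem => hc hmem)
  obtain ⟨q1, s, hrep⟩ := prod_clm_repX ψ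
  rw [hrep] at hu
  simp only [Estar, Set.mem_setOf_eq] at hq0
  have hs : s ≤ 0 := by
    by_contra hpos
    push_neg at hpos
    set m := max w0 ((u + 1 - q1 y0) / s) with hm
    have hmem : (y0, m) ∈ {q : X × ℝ | h q.1 ≤ (q.2 : EReal)} := by
      simp only [Set.mem_setOf_eq, hw0, EReal.coe_le_coe_iff]
      exact le_max_left _ _
    have h1 := hsep _ hmem
    rw [hrep] at h1
    have h2 : (u + 1 - q1 y0) / s ≤ m := le_max_right _ _
    have h3 : u + 1 - q1 y0 ≤ m * s := by
      calc u + 1 - q1 y0 = ((u + 1 - q1 y0) / s) * s := by field_simp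
        _ ≤ m * s := mul_le_mul_of_nonneg_right h2 hpos.le
    linarith
  rcases lt_or_eq_of_le hs with hslt | hseq
  · have hσ : (0:ℝ) < -s := by linarith
    have hmem : (((-s)⁻¹ • q1 : WeakDual ℝ X), (-s)⁻¹ * u) ∈ Estar h := by
      intro y ρ hyρ
      have h1 := hsep (y, ρ) hyρ
      rw [hrep] at h1
      show (-s)⁻¹ * q1 y ≤ (-s)⁻¹ * u + ρ
      have h2 : q1 y ≤ u + ρ * (-s) := by nlinarith
      calc (-s)⁻¹ * q1 y ≤ (-s)⁻¹ * (u + ρ * (-s)) :=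
            mul_le_mul_of_nonneg_left h2 (inv_nonneg.2 hσ.le)
        _ = (-s)⁻¹ * u + ρ := by
            have hsne : s ≠ 0 := by linarith
            field_simp; ring
    have h3 := H _ hmem
    have h4 : (-s)⁻¹ * q1 x ≤ (-s)⁻¹ * u + r := h3
    have h5 : q1 x ≤ u + r * (-s) := by
      have := mul_le_mul_of_nonneg_left h4 hσ.le
      have hsne : s ≠ 0 := by linarith
      have he : (-s) * ((-s)⁻¹ * q1 x) = q1 x := by field_simp
      have he2 : (-s) * ((-s)⁻¹ * u + r) = u + r * (-s) := by field_simp; ring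
      rw [he, he2] at this
      exact this
    nlinarith
  · have hq1x : q1 x ≤ u := by
      by_contra hgt
      push_neg at hgt
      set d := q1 x - u with hd
      have hdpos : 0 < d := by linarith
      set lam := max 1 ((t0 + r - q0 x + 1) / d) with hlamdef
      have hlam : (0:ℝ) < lam := lt_of_lt_of_le one_pos (le_max_left _ _)
      have hmem : ((q0 + lam • q1 : WeakDual ℝ X), t0 + lam * u) ∈ Estar h := by
        intro y ρ hyρ
        have h1 := hsep (y, ρ) hyρ
        rw [hrep, hseq, mul_zero, add_zero] at h1
        have h2 := hq0 y ρ hyρ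
        show q0 y + lam * q1 y ≤ (t0 + lam * u) + ρ
        nlinarith [mul_le_mul_of_nonneg_left h1.le hlam.le]
      have h3 := H _ hmem
      have h3' : q0 x + lam * q1 x ≤ (t0 + lam * u) + r := h3
      have h4 : (t0 + r - q0 x + 1) / d ≤ lam := le_max_right _ _
      have h5 : t0 + r - q0 x + 1 ≤ lam * d := by
        calc t0 + r - q0 x + 1 = ((t0 + r - q0 x + 1) / d) * d := by field_simp
          _ ≤ lam * d := mul_le_mul_of_nonneg_right h4 hdpos.le
      nlinarith
    rw [hseq, mul_zero, add_zero] at hu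
    linarith

lemma inGamma_indicatorE {C : Set X} (hCne : C.Nonempty) (hCcl : IsClosed C)
    (hCcv : Convex ℝ C) : InGamma (indicatorE C) := by
  classical
  refine ⟨fun x => ?_, ?_, ?_, ?_⟩
  · unfold indicatorE; split_ifs <;> simp
  · obtain ⟨c0, hc0⟩ := hCne
    exact ⟨c0, by rw [indicatorE_of_mem hc0]; exact (by norm_num)⟩
  · intro a ha b hb θ1 θ2 h1 h2 hsum
    simp only [Set.mem_setOf_eq] at ha hb ⊢
    rw [show ((θ1 • a + θ2 • b).1 : X) = θ1 • a.1 + θ2 • b.1 from rfl,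
      show ((θ1 • a + θ2 • b).2 : ℝ) = θ1 * a.2 + θ2 * b.2 from rfl]
    rw [indicatorE_le_coe] at ha hb ⊢
    exact ⟨hCcv ha.1 hb.1 h1 h2 hsum,
      add_nonneg (mul_nonneg h1 ha.2) (mul_nonneg h2 hb.2)⟩
  · intro x y hy
    by_cases hx : x ∈ C
    · rw [indicatorE_of_mem hx] at hy
      refine Filter.Eventually.of_forall fun z => lt_of_lt_of_le hy ?_
      unfold indicatorE; split_ifs
      · exact le_refl _
      · exact le_top
    · rw [indicatorE_of_not_mem hx] at hy
      have hev : ∀ᶠ z in nhds x, z ∈ Cᶜ := hCcl.isOpen_compl.mem_nhds hx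
      exact hev.mono fun z hz => by beta_reduce; rw [indicatorE_of_not_mem hz]; exact hy

end FM

end MyAux

/-- Proposition 2 (An asymptotic optimality condition). -/
theorem stmt18 [IsTopologicalAddGroup X] [ContinuousSMul ℝ X] [LocallyConvexSpace ℝ X] [T2Space X] {I : Type*} (C : Set X) (hCne : C.Nonempty) (hCcl : IsClosed C) (hCcv : Convex ℝ C)
    (f : I → X → EReal) (hf : ∀ i, InGamma (f i))
    (g : X → EReal) (hg : InGamma g)
    (p : WeakDual ℝ X) (xb : X) (hxb : xb ∈ solSet C f ∩ domFn g) :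
    (∀ x ∈ solSet C f,
        g xb - ((p xb : ℝ) : EReal) ≤ g x - ((p x : ℝ) : EReal)) ↔
      (p, p xb - (g xb).toReal) ∈ closure (epiFn (conjFn g) + charCone C f) := by
  classical
  obtain ⟨hxbA, hxbdom⟩ := hxb
  have hgbot := hg.1
  have hgb_ne_top : g xb ≠ ⊤ := LT.lt.ne hxbdom
  set gr : ℝ := (g xb).toReal with hgrdef
  have hgxb : g xb = (gr : EReal) := ((g xb).coe_toReal hgb_ne_top (hgbot xb)).symm
  set c : ℝ := p xb - gr with hcdef
  -- subset facts about the characteristic cone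
  have hCsubK : epiFn (conjFn (indicatorE C)) ⊆ charCone C f :=
    fun w hw => subset_coneGen _ (Or.inl hw)
  have hfsubK : ∀ i, epiFn (conjFn (f i)) ⊆ charCone C f :=
    fun i w hw => subset_coneGen _ (Or.inr (Set.mem_iUnion.2 ⟨i, hw⟩))
  have hKbound : ∀ k ∈ charCone C f, ∀ y ∈ solSet C f, k.1 y ≤ k.2 := by
    intro k hk
    refine coneGen_subset (M := {w : WeakDual ℝ X × ℝ | ∀ y ∈ solSet C f, w.1 y ≤ w.2})
      ?_ ?_ ?_ ?_ hk
    · rintro w (hw | hw)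
      · rw [epiFn_conjFn_eq] at hw
        intro y hy
        have := hw y 0 (by rw [indicatorE_le_coe]; exact ⟨hy.1, le_rfl⟩)
        simpa using this
      · rw [Set.mem_iUnion] at hw
        obtain ⟨i, hw⟩ := hw
        rw [epiFn_conjFn_eq] at hw
        intro y hy
        have := hw y 0 (by rw [EReal.coe_zero]; exact hy.2 i)
        simpa using this
    · intro a ha b hb θ1 θ2 h1 h2 hsum
      intro y hy
      have e1 : (θ1 • a + θ2 • b).1 y = θ1 * a.1 y + θ2 * b.1 y := rfl
      have e2 : (θ1 • a + θ2 • b).2 = θ1 * a.2 + θ2 * b.2 := rfl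
      rw [e1, e2]
      nlinarith [mul_le_mul_of_nonneg_left (ha y hy) h1, mul_le_mul_of_nonneg_left (hb y hy) h2]
    · intro y _
      show (0 : WeakDual ℝ X) y ≤ (0:ℝ)
      rw [show (0 : WeakDual ℝ X) y = 0 from rfl]
    · intro c0 hc0 w hw y hy
      have e1 : (c0 • w).1 y = c0 * w.1 y := rfl
      have e2 : (c0 • w).2 = c0 * w.2 := rfl
      rw [e1, e2]
      exact mul_le_mul_of_nonneg_left (hw y hy) hc0
  -- reformulated optimality
  have opt_iff : (∀ x ∈ solSet C f,
        g xb - ((p xb : ℝ) : EReal) ≤ g x - ((p x : ℝ) : EReal)) ↔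
      (∀ x ∈ solSet C f, ∀ r : ℝ, g x ≤ (r : EReal) → p x ≤ c + r) := by
    constructor
    · intro hopt x hx r hr
      have h1 := hopt x hx
      rw [hgxb] at h1
      have hne : g x ≠ ⊤ := (lt_of_le_of_lt hr (EReal.coe_lt_top r)).ne
      obtain ⟨v, hv⟩ : ∃ v : ℝ, g x = (v : EReal) :=
        ⟨(g x).toReal, ((g x).coe_toReal hne (hgbot x)).symm⟩
      rw [hv] at h1 hr
      rw [← EReal.coe_sub, ← EReal.coe_sub, EReal.coe_le_coe_iff] at h1
      rw [EReal.coe_le_coe_iff] at hr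
      rw [hcdef]
      linarith
    · intro hopt x hx
      rw [hgxb]
      by_cases htop : g x = ⊤
      · rw [htop, EReal.top_sub_coe]
        exact le_top
      · obtain ⟨v, hv⟩ : ∃ v : ℝ, g x = (v : EReal) :=
          ⟨(g x).toReal, ((g x).coe_toReal htop (hgbot x)).symm⟩
        have h1 := hopt x hx v (le_of_eq hv)
        rw [hv, ← EReal.coe_sub, ← EReal.coe_sub, EReal.coe_le_coe_iff]
        rw [hcdef] at h1
        linarith
  rw [opt_iff]
  constructor
  · -- hard direction
    intro hopt
    by_contra hnm
    set E := epiFn (conjFn g) + charCone C f with hE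
    have hEconv : Convex ℝ E := by
      rw [hE, epiFn_conjFn_eq]
      exact (convex_Estar g).add (coneGen_convex _)
    obtain ⟨φ, u, hsep, hu⟩ :=
      geometric_hahn_banach_closed_point hEconv.closure isClosed_closure hnm
    obtain ⟨x0, s, hrep⟩ := prod_clm_rep φ
    have hsepE : ∀ w ∈ E, w.1 x0 + w.2 * s < u := by
      rintro ⟨w1, w2⟩ hw
      have h := hsep _ (subset_closure hw)
      rwa [hrep] at h
    have hu' : u < p x0 + c * s := by
      have := hu
      rwa [hrep p c] at this
    obtain ⟨⟨q0, t0⟩, hq0⟩ := exists_mem_Estar hg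
    have hq0E : ((q0, t0) : WeakDual ℝ X × ℝ) ∈ epiFn (conjFn g) := by
      rw [epiFn_conjFn_eq]; exact hq0
    have hmemE : ∀ k ∈ charCone C f, ((q0, t0) + k) ∈ E := fun k hk =>
      Set.add_mem_add hq0E hk
    have hw0E : ((q0, t0) : WeakDual ℝ X × ℝ) ∈ E := by
      have := Set.add_mem_add hq0E (zero_mem_coneGen
        (epiFn (conjFn (indicatorE C)) ∪ ⋃ i, epiFn (conjFn (f i))))
      rwa [add_zero] at this
    have hval0 : q0 x0 + t0 * s < u := hsepE (q0, t0) hw0E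
    have h01K : ((0 : WeakDual ℝ X), (1:ℝ)) ∈ charCone C f := by
      refine hCsubK ?_
      rw [epiFn_conjFn_eq]
      intro y ρ hρ
      rw [indicatorE_le_coe] at hρ
      show (0 : WeakDual ℝ X) y ≤ 1 + ρ
      rw [show (0 : WeakDual ℝ X) y = 0 from rfl]
      linarith [hρ.2]
    have hs : s ≤ 0 := by
      by_contra hpos
      push_neg at hpos
      set lam := max 0 ((u - (q0 x0 + t0 * s) + 1) / s) with hlam
      have hlam0 : (0:ℝ) ≤ lam := le_max_left _ _
      have hmem := hmemE _ (coneGen_smul hlam0 h01K)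
      have e1 : ((q0, t0) + lam • ((0 : WeakDual ℝ X), (1:ℝ))).1 x0 = q0 x0 := by
        show (q0 + lam • (0 : WeakDual ℝ X)) x0 = q0 x0
        rw [smul_zero, add_zero]
      have e2 : ((q0, t0) + lam • ((0 : WeakDual ℝ X), (1:ℝ))).2 = t0 + lam := by
        show t0 + lam * 1 = t0 + lam
        ring
      have h1 := hsepE _ hmem
      rw [e1, e2] at h1
      have h2 : (u - (q0 x0 + t0 * s) + 1) / s ≤ lam := le_max_right _ _
      have h3 : u - (q0 x0 + t0 * s) + 1 ≤ lam * s := by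
        calc u - (q0 x0 + t0 * s) + 1 = ((u - (q0 x0 + t0 * s) + 1) / s) * s := by field_simp
          _ ≤ lam * s := mul_le_mul_of_nonneg_right h2 hpos.le
      nlinarith
    rcases lt_or_eq_of_le hs with hslt | hseq
    · -- s < 0
      have hσ : (0:ℝ) < -s := by linarith
      have hσne : -s ≠ 0 := hσ.ne'
      have hsne : s ≠ 0 := ne_of_lt hslt
      have hKx : ∀ k ∈ charCone C f, k.1 x0 + k.2 * s ≤ 0 := by
        rintro ⟨k1, k2⟩ hk
        by_contra hposk
        push_neg at hposk
        have hepos : (0:ℝ) < k1 x0 + k2 * s := hposk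
        set lam := (u - (q0 x0 + t0 * s) + 1) / (k1 x0 + k2 * s) with hlam
        have hlampos : 0 < lam := div_pos (by linarith) hepos
        have hmem := hmemE _ (coneGen_smul hlampos.le hk)
        have e1 : ((q0, t0) + lam • ((k1 : WeakDual ℝ X), k2)).1 x0
            = q0 x0 + lam * k1 x0 := rfl
        have e2 : ((q0, t0) + lam • ((k1 : WeakDual ℝ X), k2)).2 = t0 + lam * k2 := rfl
        have h1 := hsepE _ hmem
        rw [e1, e2] at h1
        have hene : k1 x0 + k2 * s ≠ 0 := hepos.ne'
        have h2 : lam * (k1 x0 + k2 * s) = u - (q0 x0 + t0 * s) + 1 := by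
          rw [hlam]; exact div_mul_cancel₀ _ hene
        nlinarith
      set x1 := (-s)⁻¹ • x0 with hx1
      have hKx1 : ∀ k ∈ charCone C f, k.1 x1 ≤ k.2 := by
        rintro ⟨k1, k2⟩ hk
        have h1 := hKx _ hk
        show k1 x1 ≤ k2
        rw [hx1, map_smul, smul_eq_mul]
        have h2 : k1 x0 ≤ k2 * (-s) := by linarith
        calc (-s)⁻¹ * k1 x0 ≤ (-s)⁻¹ * (k2 * (-s)) :=
              mul_le_mul_of_nonneg_left h2 (inv_nonneg.2 hσ.le)
          _ = k2 := by field_simp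
      have hx1C : x1 ∈ C := by
        have hH : ∀ w ∈ Estar (indicatorE C), w.1 x1 ≤ w.2 + 0 := by
          intro w hw
          rw [add_zero]
          exact hKx1 w (hCsubK (by rw [epiFn_conjFn_eq]; exact hw))
        have hind := FM (inGamma_indicatorE hCne hCcl hCcv) x1 0 hH
        by_contra hx
        rw [indicatorE_of_not_mem hx] at hind
        exact absurd hind (by simp)
      have hx1A : x1 ∈ solSet C f := by
        refine ⟨hx1C, fun i => ?_⟩
        have hH : ∀ w ∈ Estar (f i), w.1 x1 ≤ w.2 + 0 := by
          intro w hw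
          rw [add_zero]
          exact hKx1 w (hfsubK i (by rw [epiFn_conjFn_eq]; exact hw))
        have := FM (hf i) x1 0 hH
        rwa [EReal.coe_zero] at this
      have hgx1 : g x1 ≤ (((-s)⁻¹ * u : ℝ) : EReal) := by
        refine FM hg x1 _ ?_
        intro w hw
        have hwE : w ∈ E := by
          have := Set.add_mem_add
            (show w ∈ epiFn (conjFn g) by rw [epiFn_conjFn_eq]; exact hw)
            (zero_mem_coneGen (epiFn (conjFn (indicatorE C)) ∪ ⋃ i, epiFn (conjFn (f i))))
          rwa [add_zero] at this
        have h1 := hsepE w hwE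
        show w.1 x1 ≤ w.2 + (-s)⁻¹ * u
        rw [hx1, map_smul, smul_eq_mul]
        have h2 : w.1 x0 ≤ u + w.2 * (-s) := by linarith
        calc (-s)⁻¹ * w.1 x0 ≤ (-s)⁻¹ * (u + w.2 * (-s)) :=
              mul_le_mul_of_nonneg_left h2 (inv_nonneg.2 hσ.le)
          _ = w.2 + (-s)⁻¹ * u := by field_simp; ring
      have hfin := hopt x1 hx1A ((-s)⁻¹ * u) hgx1
      have hpx1 : p x1 = (-s)⁻¹ * p x0 := by rw [hx1, map_smul, smul_eq_mul]
      rw [hpx1] at hfin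
      have h6 := mul_le_mul_of_nonneg_left hfin hσ.le
      have e1 : (-s) * ((-s)⁻¹ * p x0) = p x0 := by field_simp
      have e2 : (-s) * (c + (-s)⁻¹ * u) = c * (-s) + u := by field_simp; ring
      rw [e1, e2] at h6
      nlinarith
    · -- s = 0
      have hsepE0 : ∀ w ∈ E, w.1 x0 < u := by
        intro w hw
        have := hsepE w hw
        rw [hseq, mul_zero, add_zero] at this
        exact this
      have hu0 : u < p x0 := by
        have := hu'
        rw [hseq, mul_zero, add_zero] at this
        exact this
      have hKx0 : ∀ k ∈ charCone C f, k.1 x0 ≤ 0 := by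
        rintro ⟨k1, k2⟩ hk
        by_contra hposk
        push_neg at hposk
        set lam := (u - q0 x0 + 1) / (k1 x0) with hlam
        have hq0x0 : q0 x0 < u := hsepE0 (q0, t0) hw0E
        have hlampos : 0 < lam := div_pos (by linarith) hposk
        have hmem := hmemE _ (coneGen_smul hlampos.le hk)
        have h1 : q0 x0 + lam * k1 x0 < u := hsepE0 _ hmem
        have hk1ne : k1 x0 ≠ 0 := hposk.ne'
        have h2 : lam * k1 x0 = u - q0 x0 + 1 := by rw [hlam]; field_simp
        linarith
      have hx2C : xb + x0 ∈ C := by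
        have hH : ∀ w ∈ Estar (indicatorE C), w.1 (xb + x0) ≤ w.2 + 0 := by
          intro w hw
          have h1 := hw xb 0 (by rw [indicatorE_le_coe]; exact ⟨hxbA.1, le_rfl⟩)
          have h2 := hKx0 w (hCsubK (by rw [epiFn_conjFn_eq]; exact hw))
          rw [map_add]
          linarith
        have hind := FM (inGamma_indicatorE hCne hCcl hCcv) (xb + x0) 0 hH
        by_contra hx
        rw [indicatorE_of_not_mem hx] at hind
        exact absurd hind (by simp)
      have hx2f : ∀ i, f i (xb + x0) ≤ (0 : EReal) := by
        intro i
        have hH : ∀ w ∈ Estar (f i), w.1 (xb + x0) ≤ w.2 + 0 := by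
          intro w hw
          have h1 := hw xb 0 (by rw [EReal.coe_zero]; exact hxbA.2 i)
          have h2 := hKx0 w (hfsubK i (by rw [epiFn_conjFn_eq]; exact hw))
          rw [map_add]
          linarith
        have := FM (hf i) (xb + x0) 0 hH
        rwa [EReal.coe_zero] at this
      have hgx2 : g (xb + x0) ≤ ((gr + u : ℝ) : EReal) := by
        refine FM hg (xb + x0) _ ?_
        intro w hw
        have h1 := hw xb gr (le_of_eq hgxb)
        have hwE : w ∈ E := by
          have := Set.add_mem_add
            (show w ∈ epiFn (conjFn g) by rw [epiFn_conjFn_eq]; exact hw)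
            (zero_mem_coneGen (epiFn (conjFn (indicatorE C)) ∪ ⋃ i, epiFn (conjFn (f i))))
          rwa [add_zero] at this
        have h2 := hsepE0 w hwE
        rw [map_add]
        linarith
      have hfin := hopt (xb + x0) ⟨hx2C, hx2f⟩ (gr + u) hgx2
      rw [map_add] at hfin
      rw [hcdef] at hfin
      linarith
  · -- easy direction
    intro hmem x hx r hr
    set F : X → EReal := fun y => g y + indicatorE (solSet C f) y with hF
    have hFiff : ∀ (y : X) (ρ : ℝ), F y ≤ (ρ : EReal) ↔ y ∈ solSet C f ∧ g y ≤ (ρ : EReal) := by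
      intro y ρ
      simp only [hF]
      by_cases hy : y ∈ solSet C f
      · rw [indicatorE_of_mem hy, add_zero]
        simp [hy]
      · rw [indicatorE_of_not_mem hy, EReal.add_top_of_ne_bot (hgbot y)]
        simp [hy]
    have hsubS : epiFn (conjFn g) + charCone C f ⊆ Estar F := by
      rintro w hw
      rw [Set.mem_add] at hw
      obtain ⟨w1, hw1, w2, hw2, rfl⟩ := hw
      rw [epiFn_conjFn_eq] at hw1
      intro y ρ hρ
      rw [hFiff] at hρ
      obtain ⟨hyA, hgy⟩ := hρ
      have h1 := hw1 y ρ hgy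
      have h2 := hKbound w2 hw2 y hyA
      have e1 : (w1 + w2).1 y = w1.1 y + w2.1 y := rfl
      have e2 : (w1 + w2).2 = w1.2 + w2.2 := rfl
      rw [e1, e2]
      linarith
    have hcl := closure_minimal hsubS (isClosed_Estar F)
    exact hcl hmem x r ((hFiff x r).2 ⟨hx, hr⟩)
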